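/- Let Φ be the standard normal CDF, a_U > 0 > a_L, and b_L, b_U ∈ ℝ. Then n ↦ Φ(a_U√n + b_U) − Φ(a_L√n + b_L) is strictly increasing for sufficiently large n > 0, and converges to 1 as n → ∞. -/

import Mathlib

open MeasureTheory ProbabilityTheory Filter

/-- The standard normal cumulative distribution function. -/
noncomputable def stdNormCDF (x : ℝ) : ℝ := ((gaussianReal 0 1) (Set.Iic x)).toReal

lemma stdNormCDF_strictMono : StrictMono stdNormCDF := by
  intro x y hxy
  unfold stdNormCDF
  have hfin : ∀ s : Set ℝ, (gaussianReal 0 1) s ≠ ⊤ := fun s => measure_ne_top _ s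
  have hsub : Set.Iic x ⊆ Set.Iic y := Set.Iic_subset_Iic.mpr hxy.le
  have hsplit : Set.Iic y = Set.Iic x ∪ Set.Ioc x y := (Set.Iic_union_Ioc_eq_Iic hxy.le).symm
  have hpos : 0 < (gaussianReal 0 1) (Set.Ioc x y) := by
    by_contra h
    push_neg at h
    have h0 : (gaussianReal 0 1) (Set.Ioc x y) = 0 := le_antisymm h zero_le
    have := (gaussianReal_absolutelyContinuous' 0 (v := 1) one_ne_zero) h0
    have hvol : (volume : Measure ℝ) (Set.Ioc x y) = ENNReal.ofReal (y - x) := by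
      simp [Real.volume_Ioc]
    rw [hvol] at this
    rw [ENNReal.ofReal_eq_zero] at this
    linarith
  have hmeas : (gaussianReal 0 1) (Set.Iic y)
      = (gaussianReal 0 1) (Set.Iic x) + (gaussianReal 0 1) (Set.Ioc x y) := by
    rw [hsplit, measure_union _ measurableSet_Ioc]
    rw [Set.disjoint_left]
    intro a ha ha'
    exact absurd ha (not_le.mpr ha'.1)
  rw [hmeas, ENNReal.toReal_add (hfin _) (hfin _)]
  have : 0 < ((gaussianReal 0 1) (Set.Ioc x y)).toReal :=
    ENNReal.toReal_pos hpos.ne' (hfin _)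
  linarith

lemma stdNormCDF_tendsto_one : Tendsto stdNormCDF atTop (nhds 1) := by
  have h := tendsto_measure_Iic_atTop (gaussianReal 0 1)
  rw [measure_univ] at h
  have := (ENNReal.tendsto_toReal (by norm_num : (1 : ENNReal) ≠ ⊤)).comp h
  simp [Function.comp_def] at this
  exact this

lemma stdNormCDF_tendsto_zero : Tendsto stdNormCDF atBot (nhds 0) := by
  have h := tendsto_measure_iInter_atBot (μ := gaussianReal 0 1) (s := fun x : ℝ => Set.Iic x)
    (fun i => measurableSet_Iic.nullMeasurableSet) (fun a b hab => Set.Iic_subset_Iic.mpr hab)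
    ⟨0, measure_ne_top _ _⟩
  have hempty : (⋂ n : ℝ, Set.Iic n) = ∅ := by
    ext z
    simp only [Set.mem_iInter, Set.mem_Iic, Set.mem_empty_iff_false, iff_false, not_forall]
    exact ⟨z - 1, by push_neg; linarith⟩
  rw [hempty, measure_empty] at h
  have := (ENNReal.tendsto_toReal (by norm_num : (0 : ENNReal) ≠ ⊤)).comp h
  simp [Function.comp_def] at this
  exact this

/-- For a_U > 0 > a_L, the difference Φ(a_U√n + b_U) - Φ(a_L√n + b_L) is strictly increasing
for sufficiently large n > 0 and converges to 1 as n → ∞. -/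
theorem phi_difference_eventually_strictMono_and_tendsto_one
    (aU aL bU bL : ℝ) (haU : 0 < aU) (haL : aL < 0) :
    (∃ N : ℝ, 0 < N ∧ StrictMonoOn
        (fun n : ℝ => stdNormCDF (aU * Real.sqrt n + bU) - stdNormCDF (aL * Real.sqrt n + bL))
        (Set.Ici N)) ∧
    Tendsto (fun n : ℝ => stdNormCDF (aU * Real.sqrt n + bU) - stdNormCDF (aL * Real.sqrt n + bL))
      atTop (nhds 1) := by
  constructor
  · refine ⟨1, one_pos, ?_⟩
    intro m hm n hn hmn
    have hsq : Real.sqrt m < Real.sqrt n :=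
      Real.sqrt_lt_sqrt (by linarith [Set.mem_Ici.mp hm]) hmn
    have h1 : stdNormCDF (aU * Real.sqrt m + bU) < stdNormCDF (aU * Real.sqrt n + bU) :=
      stdNormCDF_strictMono (by nlinarith)
    have h2 : stdNormCDF (aL * Real.sqrt n + bL) < stdNormCDF (aL * Real.sqrt m + bL) :=
      stdNormCDF_strictMono (by nlinarith)
    simp only
    linarith
  · have hsqrt : Tendsto Real.sqrt atTop atTop :=
      tendsto_atTop_atTop_of_monotone (fun a b hab => Real.sqrt_le_sqrt hab)
        (fun b => ⟨b ^ 2, by rw [Real.sqrt_sq_eq_abs]; exact le_abs_self b⟩)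
    have hU : Tendsto (fun n : ℝ => aU * Real.sqrt n + bU) atTop atTop :=
      tendsto_atTop_add_const_right _ bU (hsqrt.const_mul_atTop haU)
    have hL : Tendsto (fun n : ℝ => aL * Real.sqrt n + bL) atTop atBot :=
      tendsto_atBot_add_const_right _ bL (hsqrt.const_mul_atTop_of_neg haL)
    have t1 := stdNormCDF_tendsto_one.comp hU
    have t2 := stdNormCDF_tendsto_zero.comp hL
    have := t1.sub t2
    simpa using this
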